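/- Let α, β, γ, λ, μ be real numbers and let N(α,β,γ,λ,μ) be the 3×3 real matrix whose rows are (α,β,γ), (λα,λβ,λγ), (μα,μβ,μγ). Suppose α ≠ 0 and α² + λβ² + μγ² ≠ 0. If one of the following holds: (1) λ > 0, μ < 0 and α² + λβ² + μγ² < 0; (2) λ < 0, μ > 0, α² + λβ² < 0 and α² + λβ² + μγ² < 0; (3) λ < 0, μ < 0, α² + λβ² > 0 and α² + λβ² + μγ² > 0; then the evolution algebra E_{N(α,β,γ,λ,μ)} is isomorphic to the evolution algebra E₉ whose structure matrix has rows (1,0,0), (−1,0,0), (−1,0,0). -/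

import Mathlib

set_option maxHeartbeats 1000000

/-- Evolution algebra multiplication on ℝ³ determined by a structure matrix `A`:
`(x ∗_A y) j = ∑ i, x i * y i * A i j`. -/
def evolMul (A : Matrix (Fin 3) (Fin 3) ℝ) (x y : Fin 3 → ℝ) : Fin 3 → ℝ :=
  fun j => ∑ i, x i * y i * A i j

/-- The evolution algebras with structure matrices `A` and `B` are isomorphic:
there is an ℝ-linear equivalence of ℝ³ intertwining the two multiplications. -/
def EvolIso (A B : Matrix (Fin 3) (Fin 3) ℝ) : Prop :=
  ∃ f : (Fin 3 → ℝ) ≃ₗ[ℝ] (Fin 3 → ℝ),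
    ∀ x y, f (evolMul A x y) = evolMul B (f x) (f y)

theorem stmt (a b c l m : ℝ)
    (ha : a ≠ 0) (hq : a ^ 2 + l * b ^ 2 + m * c ^ 2 ≠ 0)
    (hcond : (l > 0 ∧ m < 0 ∧ a ^ 2 + l * b ^ 2 + m * c ^ 2 < 0) ∨
             (l < 0 ∧ m > 0 ∧ a ^ 2 + l * b ^ 2 < 0 ∧ a ^ 2 + l * b ^ 2 + m * c ^ 2 < 0) ∨
             (l < 0 ∧ m < 0 ∧ a ^ 2 + l * b ^ 2 > 0 ∧ a ^ 2 + l * b ^ 2 + m * c ^ 2 > 0)) :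
    EvolIso (!![a, b, c; l * a, l * b, l * c; m * a, m * b, m * c] : Matrix (Fin 3) (Fin 3) ℝ) (!![1, 0, 0; -1, 0, 0; -1, 0, 0] : Matrix (Fin 3) (Fin 3) ℝ) := by
  obtain ⟨p, hpdef⟩ : ∃ p : ℝ, p = a ^ 2 + l * b ^ 2 := ⟨_, rfl⟩
  obtain ⟨s, hsdef⟩ : ∃ s : ℝ, s = a ^ 2 + l * b ^ 2 + m * c ^ 2 := ⟨_, rfl⟩
  have hs0 : s ≠ 0 := hsdef ▸ hq
  have h2 : 0 < -(s * l * p) := by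
    rcases hcond with ⟨h1, h2, h3⟩ | ⟨h1, h2, h3, h4⟩ | ⟨h1, h2, h3, h4⟩
    · have hp : 0 < p := by
        have := pow_pos (abs_pos.mpr ha) 2
        rw [hpdef]; nlinarith [sq_abs a, mul_nonneg h1.le (sq_nonneg b)]
      have hs : s < 0 := hsdef ▸ h3
      have := mul_neg_of_neg_of_pos (mul_neg_of_neg_of_pos hs h1) hp
      linarith
    · have hp : p < 0 := hpdef ▸ h3
      have hs : s < 0 := hsdef ▸ h4
      have := mul_neg_of_pos_of_neg (mul_pos_of_neg_of_neg hs h1) hp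
      linarith
    · have hp : 0 < p := hpdef ▸ h3
      have hs : 0 < s := hsdef ▸ h4
      have := mul_neg_of_neg_of_pos (mul_neg_of_pos_of_neg hs h1) hp
      linarith
  have h3 : 0 < -(m * p) := by
    rcases hcond with ⟨h1, h2, h3⟩ | ⟨h1, h2, h3, h4⟩ | ⟨h1, h2, h3, h4⟩
    · have hp : 0 < p := by
        have := pow_pos (abs_pos.mpr ha) 2
        rw [hpdef]; nlinarith [sq_abs a, mul_nonneg h1.le (sq_nonneg b)]
      have := mul_neg_of_neg_of_pos h2 hp
      linarith
    · have hp : p < 0 := hpdef ▸ h3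
      have := mul_neg_of_pos_of_neg h2 hp
      linarith
    · have hp : 0 < p := hpdef ▸ h3
      have := mul_neg_of_neg_of_pos h2 hp
      linarith
  have hp0 : p ≠ 0 := by
    intro h
    rw [h, mul_zero, neg_zero] at h3
    exact lt_irrefl 0 h3
  obtain ⟨r2, hr2sq, hr2⟩ : ∃ r2 : ℝ, r2 ^ 2 = -(s * l * p) ∧ r2 ≠ 0 :=
    ⟨Real.sqrt (-(s * l * p)), Real.sq_sqrt h2.le,
      ne_of_gt (Real.sqrt_pos.mpr h2)⟩
  obtain ⟨r3, hr3sq, hr3⟩ : ∃ r3 : ℝ, r3 ^ 2 = -(m * p) * s ^ 2 ∧ r3 ≠ 0 :=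
    ⟨Real.sqrt (-(m * p)) * s, by rw [mul_pow, Real.sq_sqrt h3.le],
      mul_ne_zero (ne_of_gt (Real.sqrt_pos.mpr h3)) hs0⟩
  set G : Matrix (Fin 3) (Fin 3) ℝ :=
    !![a / s, -(l * b) / r2, -(m * c * a) / r3;
       b / s, a / r2, -(m * c * b) / r3;
       c / s, 0, p / r3] with hGdef
  have hsp : s = p + m * c ^ 2 := by rw [hsdef, hpdef]
  have hdetval : G.det = p / (r2 * r3) := by
    rw [hGdef, Matrix.det_fin_three]
    norm_num [Matrix.cons_val_one, Matrix.cons_val_two, Matrix.vecHead, Matrix.vecTail]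
    field_simp
    linear_combination (-(p+m*c^2))*hpdef + (-p)*hsp
  have hdet : IsUnit G.det := by
    rw [isUnit_iff_ne_zero, hdetval]
    exact div_ne_zero hp0 (mul_ne_zero hr2 hr3)
  have hInv : Invertible G := G.invertibleOfIsUnitDet hdet
  set e := G.toLinearEquiv' hInv with hedef
  have he : ∀ x, e x = G.mulVec x := fun x => rfl
  have hscal : ∀ x0 x1 x2 y0 y1 y2 : ℝ,
      (a / s * x0 + -(l * b) / r2 * x1 + -(m * c * a) / r3 * x2) *
        (a / s * y0 + -(l * b) / r2 * y1 + -(m * c * a) / r3 * y2)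
      + l * ((b / s * x0 + a / r2 * x1 + -(m * c * b) / r3 * x2) *
        (b / s * y0 + a / r2 * y1 + -(m * c * b) / r3 * y2))
      + m * ((c / s * x0 + 0 * x1 + p / r3 * x2) * (c / s * y0 + 0 * y1 + p / r3 * y2))
      = (x0 * y0 - x1 * y1 - x2 * y2) / s := by
    intro x0 x1 x2 y0 y1 y2
    field_simp
    linear_combination
      (-(x0*y0*r2^2*r3^2) - x2*y2*r2^2*s^2*m^2*c^2 + m*c*r2^2*s*r3*(x0*y2 + x2*y0)
        - x1*y1*s^2*r3^2*l) * hpdef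
      + (-(x0*y0*r2^2*r3^2) - x2*y2*r2^2*s^2*m*p) * hsp
      + (x1*y1*s*r3^2) * hr2sq
      + (x2*y2*r2^2*s) * hr3sq
  have key : ∀ x y, e (evolMul (!![1, 0, 0; -1, 0, 0; -1, 0, 0]) x y)
      = evolMul (!![a, b, c; l * a, l * b, l * c; m * a, m * b, m * c]) (e x) (e y) := by
    intro x y
    have hs := hscal (x 0) (x 1) (x 2) (y 0) (y 1) (y 2)
    rw [he, he, he]
    funext j
    fin_cases j
    · simp only [evolMul, Matrix.mulVec, dotProduct, Fin.sum_univ_three, hGdef]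
      norm_num [Matrix.cons_val_one, Matrix.cons_val_two, Matrix.vecHead, Matrix.vecTail]
      linear_combination (-a) * hs
    · simp only [evolMul, Matrix.mulVec, dotProduct, Fin.sum_univ_three, hGdef]
      norm_num [Matrix.cons_val_one, Matrix.cons_val_two, Matrix.vecHead, Matrix.vecTail]
      linear_combination (-b) * hs
    · simp only [evolMul, Matrix.mulVec, dotProduct, Fin.sum_univ_three, hGdef]
      norm_num [Matrix.cons_val_one, Matrix.cons_val_two, Matrix.vecHead, Matrix.vecTail]
      linear_combination (-c) * hs
  refine ⟨e.symm, fun x y => ?_⟩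
  have := key (e.symm x) (e.symm y)
  rw [e.apply_symm_apply, e.apply_symm_apply] at this
  rw [← this, e.symm_apply_apply]
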